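/- Let U and W be two K-vector subspaces of Kⁿ of the same dimension d with res(U) = res(W). Then there exists a matrix M ∈ GLₙ(𝒪) with res(M) = Iₙ (hence a risometry of Kⁿ) such that M(U) = W. -/

import Mathlib

noncomputable section

open scoped Classical Pointwise

section Preamble

variable {K : Type*} [Field K] {Γ : Type*} [LinearOrderedCommGroupWithZero Γ]

instance (priority := 100) : OrderBot Γ where
  bot := 0
  bot_le _ := zero_le'

/-- The max-valuation on `K^n`: `v(a) = maxᵢ v(aᵢ)`. -/
def vv (v : Valuation K Γ) {n : ℕ} (x : Fin n → K) : Γ :=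
  Finset.univ.sup fun i => v (x i)

/-- `rvEq v x y` expresses `rv(x) = rv(y)` in `RV⁽ⁿ⁾ = Kⁿ/∼`, where
`x ∼ y` iff `v(x−y) < v(x)` or `x = y = 0`. -/
def rvEq (v : Valuation K Γ) {n : ℕ} (x y : Fin n → K) : Prop :=
  vv v (x - y) < vv v x ∨ (x = 0 ∧ y = 0)

/-- Balls in `K` (with `K` itself counting as a ball). -/
def IsBall1 (v : Valuation K Γ) (B : Set K) : Prop :=
  B = Set.univ ∨ ∃ a : K, ∃ γ : Γ, γ ≠ 0 ∧
    (B = {x | v (x - a) < γ} ∨ B = {x | v (x - a) ≤ γ})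

/-- Balls in `Kⁿ` (with `Kⁿ` itself counting as a ball). -/
def IsBall (v : Valuation K Γ) {n : ℕ} (B : Set (Fin n → K)) : Prop :=
  B = Set.univ ∨ ∃ a : Fin n → K, ∃ γ : Γ, γ ≠ 0 ∧
    (B = {x | vv v (x - a) < γ} ∨ B = {x | vv v (x - a) ≤ γ})

/-- Spherical completeness: every nonempty chain of balls in `K` has nonempty
intersection. -/
def SphericallyComplete (v : Valuation K Γ) : Prop :=
  ∀ C : Set (Set K), C.Nonempty → (∀ B ∈ C, IsBall1 v B) → IsChain (· ⊆ ·) C →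
    (⋂ B ∈ C, B).Nonempty

/-- The residue field `K̄` of the valuation ring `𝒪 = {x | v x ≤ 1}`. -/
def Kbar (v : Valuation K Γ) : Type _ :=
  IsLocalRing.ResidueField v.valuationSubring

instance (v : Valuation K Γ) : Field (Kbar v) :=
  inferInstanceAs (Field (IsLocalRing.ResidueField v.valuationSubring))

/-- The residue map `res : 𝒪 → K̄`, extended by the junk value `0` outside `𝒪`. -/
def res' (v : Valuation K Γ) (x : K) : Kbar v :=
  if h : v x ≤ 1 then IsLocalRing.residue v.valuationSubring ⟨x, h⟩ else 0

/-- The coordinatewise residue map on `Kⁿ`. -/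
def resv (v : Valuation K Γ) {n : ℕ} (x : Fin n → K) : Fin n → Kbar v :=
  fun i => res' v (x i)

/-- `res(S)` for a set `S ⊆ Kⁿ`: the set of residues of points of `S ∩ 𝒪ⁿ`. -/
def resSet (v : Valuation K Γ) {n : ℕ} (S : Set (Fin n → K)) : Set (Fin n → Kbar v) :=
  resv v '' {x ∈ S | ∀ i, v (x i) ≤ 1}

/-- `dir(x) = res(K·x) ⊆ K̄ⁿ`. -/
def dirSet (v : Valuation K Γ) {n : ℕ} (x : Fin n → K) : Set (Fin n → Kbar v) :=
  resSet v {y | ∃ c : K, y = c • x}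

/-- The coordinate projection `Kⁿ → K^d` selecting the coordinates `σ 0 < σ 1 < ⋯`. -/
def proj {A : Type*} {n d : ℕ} (σ : Fin d → Fin n) (x : Fin n → A) : Fin d → A :=
  fun k => x (σ k)

/-- `σ` (a strictly increasing selection of `d` of the `n` coordinates) is an
exhibition of the `K̄`-subspace `Ū ⊆ K̄ⁿ` if the corresponding coordinate projection
`K̄ⁿ → K̄^d` restricts to an isomorphism from `Ū` onto `K̄^d`. -/
def IsExhibition (v : Valuation K Γ) {n d : ℕ} (σ : Fin d → Fin n)
    (Ubar : Submodule (Kbar v) (Fin n → Kbar v)) : Prop :=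
  StrictMono σ ∧ Set.BijOn (proj σ) (Ubar : Set (Fin n → Kbar v)) Set.univ

/-- `affdir(C)`: the `K̄`-subspace of `K̄ⁿ` generated by all `dir(x − x')`, `x, x' ∈ C`. -/
def affdir (v : Valuation K Γ) {n : ℕ} (C : Set (Fin n → K)) :
    Submodule (Kbar v) (Fin n → Kbar v) :=
  Submodule.span (Kbar v) (⋃ x ∈ C, ⋃ x' ∈ C, dirSet v (x - x'))

/-- A matrix has entries in the valuation ring `𝒪`. -/
def EntriesInO (v : Valuation K Γ) {n : ℕ} (M : Matrix (Fin n) (Fin n) K) : Prop :=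
  ∀ i j, v (M i j) ≤ 1

/-- `M ∈ GLₙ(𝒪)`: `M` is invertible, with entries in `𝒪`, and its inverse also has
entries in `𝒪`. -/
def MemGLO (v : Valuation K Γ) {n : ℕ} (M : Matrix (Fin n) (Fin n) K) : Prop :=
  EntriesInO v M ∧ ∃ N : Matrix (Fin n) (Fin n) K,
    M * N = 1 ∧ N * M = 1 ∧ EntriesInO v N

/-- The entrywise residue matrix of `M`. -/
def resM (v : Valuation K Γ) {n : ℕ} (M : Matrix (Fin n) (Fin n) K) :
    Matrix (Fin n) (Fin n) (Kbar v) :=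
  fun i j => res' v (M i j)

/-- `DeltaLE v U W γ` expresses `Δ(U, W) ≤ γ`: for every `u ∈ U` there is `w ∈ W`
with `v(u − w) ≤ v(u)·γ`. -/
def DeltaLE (v : Valuation K Γ) {n : ℕ} (U W : Submodule K (Fin n → K)) (γ : Γ) : Prop :=
  ∀ u ∈ U, ∃ w ∈ W, vv v (u - w) ≤ vv v u * γ

/-- `IsDelta v U W γ` expresses `Δ(U, W) = γ`: `γ` is the minimum of all admissible
bounds. -/
def IsDelta (v : Valuation K Γ) {n : ℕ} (U W : Submodule K (Fin n → K)) (γ : Γ) : Prop :=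
  DeltaLE v U W γ ∧ ∀ δ : Γ, DeltaLE v U W δ → γ ≤ δ

end Preamble

section AuxLemmas

variable {K : Type*} [Field K] {Γ : Type*} [LinearOrderedCommGroupWithZero Γ] (v : Valuation K Γ)

lemma res'_def {x : K} (h : v x ≤ 1) :
    res' v x = IsLocalRing.residue v.valuationSubring ⟨x, h⟩ := dif_pos h

lemma res'_zero : res' v 0 = 0 := by
  rw [res'_def v (by simp)]
  have : (⟨(0:K), by simp⟩ : v.valuationSubring) = 0 := rfl
  rw [this, map_zero]
  rfl

lemma res'_one : res' v 1 = 1 := by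
  rw [res'_def v (by simp)]
  have : (⟨(1:K), by simp⟩ : v.valuationSubring) = 1 := rfl
  rw [this, map_one]
  rfl

lemma res'_add {x y : K} (hx : v x ≤ 1) (hy : v y ≤ 1) :
    res' v (x + y) = res' v x + res' v y := by
  have hxy : v (x + y) ≤ 1 := le_trans (v.map_add x y) (max_le hx hy)
  rw [res'_def v hx, res'_def v hy, res'_def v hxy]
  have : (⟨x + y, hxy⟩ : v.valuationSubring) = ⟨x, hx⟩ + ⟨y, hy⟩ := rfl
  rw [this, map_add]
  rfl

lemma res'_mul {x y : K} (hx : v x ≤ 1) (hy : v y ≤ 1) :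
    res' v (x * y) = res' v x * res' v y := by
  have hxy : v (x * y) ≤ 1 := by
    rw [v.map_mul]; exact mul_le_one' hx hy
  rw [res'_def v hx, res'_def v hy, res'_def v hxy]
  have : (⟨x * y, hxy⟩ : v.valuationSubring) = ⟨x, hx⟩ * ⟨y, hy⟩ := rfl
  rw [this, map_mul]
  rfl

lemma res'_neg {x : K} (hx : v x ≤ 1) : res' v (-x) = - res' v x := by
  have h1 : v (-1 : K) ≤ 1 := by rw [v.map_neg, v.map_one]
  have : -x = (-1) * x := by ring
  rw [this, res'_mul v h1 hx]
  have : res' v (-1 : K) = -1 := by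
    rw [res'_def v h1]
    have : (⟨(-1:K), h1⟩ : v.valuationSubring) = -1 := rfl
    rw [this, map_neg, map_one]
    rfl
  rw [this, neg_one_mul]

lemma isUnit_val_iff {x : v.valuationSubring} : IsUnit x ↔ v (x : K) = 1 := by
  constructor
  · rintro ⟨u, rfl⟩
    have h1 : ((u : v.valuationSubring) : K) * (((u⁻¹ : _) : v.valuationSubring) : K) = 1 := by
      exact_mod_cast congrArg (Subtype.val) u.mul_inv
    have hv1 : v ((u : v.valuationSubring) : K) * v (((u⁻¹ : _) : v.valuationSubring) : K) = 1 := by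
      rw [← v.map_mul, h1, v.map_one]
    have ha : v ((u : v.valuationSubring) : K) ≤ 1 := (u : v.valuationSubring).2
    have hb : v (((u⁻¹ : _) : v.valuationSubring) : K) ≤ 1 := ((u⁻¹ : _) : v.valuationSubring).2
    refine le_antisymm ha ?_
    calc (1:Γ) = _ * _ := hv1.symm
    _ ≤ v ((u : v.valuationSubring) : K) * 1 := mul_le_mul_right hb _
    _ = v ((u : v.valuationSubring) : K) := mul_one _
  · intro hx1
    have hx0 : (x : K) ≠ 0 := by
      intro h; rw [h, v.map_zero] at hx1; exact zero_ne_one hx1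
    have hinv : v ((x : K)⁻¹) ≤ 1 := by
      rw [map_inv₀, hx1, inv_one]
    refine IsUnit.of_mul_eq_one (a := x) ⟨(x : K)⁻¹, hinv⟩ ?_
    ext
    push_cast
    exact mul_inv_cancel₀ hx0

lemma res'_eq_zero_iff {x : K} (h : v x ≤ 1) : res' v x = 0 ↔ v x < 1 := by
  rw [res'_def v h]
  erw [IsLocalRing.residue_eq_zero_iff]
  rw [IsLocalRing.mem_maximalIdeal,
    mem_nonunits_iff, isUnit_val_iff]
  exact ⟨fun hne => lt_of_le_of_ne h hne, fun hlt => ne_of_lt hlt⟩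

lemma res'_surj (y : Kbar v) : ∃ c : K, v c ≤ 1 ∧ res' v c = y := by
  obtain ⟨c, hc⟩ := IsLocalRing.residue_surjective (R := v.valuationSubring) y
  exact ⟨(c : K), c.2, by rw [res'_def v c.2]; exact_mod_cast hc⟩

end AuxLemmas

section AuxLemmas2

variable {K : Type*} [Field K] {Γ : Type*} [LinearOrderedCommGroupWithZero Γ] (v : Valuation K Γ) {n : ℕ}

lemma le_vv (x : Fin n → K) (i : Fin n) : v (x i) ≤ vv v x :=
  Finset.le_sup (f := fun i => v (x i)) (Finset.mem_univ i)

lemma vv_le {x : Fin n → K} {γ : Γ} (h : ∀ i, v (x i) ≤ γ) : vv v x ≤ γ :=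
  Finset.sup_le fun i _ => h i

lemma vv_lt {x : Fin n → K} {γ : Γ} (hγ : γ ≠ 0) (h : ∀ i, v (x i) < γ) : vv v x < γ := by
  have hbot : (⊥ : Γ) < γ := by
    rw [bot_lt_iff_ne_bot]; exact ne_bot_of_gt (zero_lt_iff.mpr hγ)
  exact Finset.sup_lt_iff hbot |>.mpr fun i _ => h i

lemma vv_eq_zero_iff {x : Fin n → K} : vv v x = 0 ↔ x = 0 := by
  constructor
  · intro h
    funext i
    have := le_vv v x i
    rw [h, le_zero_iff] at this
    simpa using v.zero_iff.mp this
  · intro h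
    subst h
    apply le_antisymm _ zero_le'
    exact vv_le v fun i => by simp

lemma vv_zero : vv v (0 : Fin n → K) = 0 := (vv_eq_zero_iff v).mpr rfl

lemma vv_smul_le (c : K) (x : Fin n → K) : vv v (c • x) ≤ v c * vv v x :=
  vv_le v fun i => by
    rw [Pi.smul_apply, smul_eq_mul, v.map_mul]
    exact mul_le_mul_right (le_vv v x i) _

lemma vv_smul (c : K) (x : Fin n → K) : vv v (c • x) = v c * vv v x := by
  rcases eq_or_ne c 0 with rfl | hc
  · simp [vv_zero, v.map_zero]
  · refine le_antisymm (vv_smul_le v c x) ?_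
    have h2 : vv v x ≤ v c⁻¹ * vv v (c • x) := by
      have : x = c⁻¹ • (c • x) := by rw [smul_smul, inv_mul_cancel₀ hc, one_smul]
      conv_lhs => rw [this]
      exact vv_smul_le v _ _
    calc v c * vv v x ≤ v c * (v c⁻¹ * vv v (c • x)) := mul_le_mul_right h2 _
    _ = (v c * v c⁻¹) * vv v (c • x) := by rw [mul_assoc]
    _ = vv v (c • x) := by
        rw [← v.map_mul, mul_inv_cancel₀ hc, v.map_one, one_mul]

lemma vv_add_le (x y : Fin n → K) : vv v (x + y) ≤ max (vv v x) (vv v y) :=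
  vv_le v fun i => le_trans (v.map_add _ _) (max_le_max (le_vv v x i) (le_vv v y i))

lemma vv_add_eq_of_lt {x y : Fin n → K} (h : vv v y < vv v x) : vv v (x + y) = vv v x := by
  refine le_antisymm (le_trans (vv_add_le v x y) (max_le le_rfl h.le)) ?_
  by_contra hlt
  push_neg at hlt
  have hneg : vv v (-y) = vv v y := by
    have h4 : -y = (-1 : K) • y := by funext i; simp
    rw [h4, vv_smul, v.map_neg, v.map_one, one_mul]
  have : vv v x ≤ max (vv v (x + y)) (vv v y) := by
    calc vv v x = vv v ((x + y) + (-y)) := by congr 1; ring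
    _ ≤ max (vv v (x + y)) (vv v (-y)) := vv_add_le v _ _
    _ = max (vv v (x + y)) (vv v y) := by rw [hneg]
  rcases max_cases (vv v (x + y)) (vv v y) with ⟨heq, _⟩ | ⟨heq, _⟩ <;> rw [heq] at this
  · exact absurd (lt_of_le_of_lt this hlt) (lt_irrefl _)
  · exact absurd (lt_of_le_of_lt this h) (lt_irrefl _)

end AuxLemmas2

section AuxLemmas3

variable {K : Type*} [Field K] {Γ : Type*} [LinearOrderedCommGroupWithZero Γ] (v : Valuation K Γ) {n : ℕ}

lemma resv_zero : resv v (0 : Fin n → K) = 0 := by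
  funext i; exact res'_zero v

lemma resv_add {x y : Fin n → K} (hx : ∀ i, v (x i) ≤ 1) (hy : ∀ i, v (y i) ≤ 1) :
    resv v (x + y) = resv v x + resv v y := by
  funext i
  exact res'_add v (hx i) (hy i)

lemma resv_smul {c : K} (hc : v c ≤ 1) {x : Fin n → K} (hx : ∀ i, v (x i) ≤ 1) :
    resv v (c • x) = res' v c • resv v x := by
  funext i
  exact res'_mul v hc (hx i)

lemma resv_sub {x y : Fin n → K} (hx : ∀ i, v (x i) ≤ 1) (hy : ∀ i, v (y i) ≤ 1) :
    resv v (x - y) = resv v x - resv v y := by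
  funext i
  have hny : v (-(y i)) ≤ 1 := by rw [v.map_neg]; exact hy i
  simp only [resv, Pi.sub_apply, sub_eq_add_neg]
  rw [res'_add v (hx i) hny, res'_neg v (hy i)]

/-- `res(U)` as a `K̄`-submodule of `K̄ⁿ`, when `U` is a `K`-submodule of `Kⁿ`. -/
def resSub (U : Submodule K (Fin n → K)) : Submodule (Kbar v) (Fin n → Kbar v) where
  carrier := resSet v (U : Set (Fin n → K))
  zero_mem' := ⟨0, ⟨U.zero_mem, fun i => by simp⟩, resv_zero v⟩
  add_mem' := by
    rintro a b ⟨x, ⟨hxU, hxO⟩, rfl⟩ ⟨y, ⟨hyU, hyO⟩, rfl⟩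
    exact ⟨x + y, ⟨U.add_mem hxU hyU, fun i =>
      le_trans (v.map_add _ _) (max_le (hxO i) (hyO i))⟩, resv_add v hxO hyO⟩
  smul_mem' := by
    rintro c a ⟨x, ⟨hxU, hxO⟩, rfl⟩
    obtain ⟨c', hc', rfl⟩ := res'_surj v c
    refine ⟨c' • x, ⟨U.smul_mem c' hxU, fun i => ?_⟩, resv_smul v hc' hxO⟩
    rw [Pi.smul_apply, smul_eq_mul, v.map_mul]
    exact mul_le_one' hc' (hxO i)

lemma mem_resSub {U : Submodule K (Fin n → K)} {a : Fin n → Kbar v} :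
    a ∈ resSub v U ↔ a ∈ resSet v (U : Set (Fin n → K)) := Iff.rfl

/-- Scaling lemma: a nonzero vector of a subspace can be scaled into `𝒪ⁿ` with
nonzero residue. -/
lemma exists_scale (U : Submodule K (Fin n → K)) {x : Fin n → K} (hxU : x ∈ U)
    (hx0 : x ≠ 0) :
    ∃ c : K, c ≠ 0 ∧ v c * vv v x = 1 ∧ (∀ i, v ((c • x) i) ≤ 1) ∧
      resv v (c • x) ≠ 0 ∧ resv v (c • x) ∈ resSub v U := by
  have hvv : vv v x ≠ 0 := fun h => hx0 ((vv_eq_zero_iff v).mp h)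
  obtain ⟨i0, -, hi0⟩ : ∃ i0 ∈ Finset.univ, vv v x = v (x i0) := by
    rcases (Finset.univ : Finset (Fin n)).eq_empty_or_nonempty with he | hne
    · exfalso; apply hvv; unfold vv; rw [he, Finset.sup_empty]; exact le_antisymm bot_le zero_le'
    · exact Finset.exists_mem_eq_sup _ hne _
  have hxi0 : x i0 ≠ 0 := by
    intro h; apply hvv; rw [hi0, h, v.map_zero]
  refine ⟨(x i0)⁻¹, inv_ne_zero hxi0, ?_, ?_, ?_, ?_⟩
  · rw [map_inv₀, hi0, inv_mul_cancel₀]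
    rw [← hi0]; exact hvv
  · intro i
    rw [Pi.smul_apply, smul_eq_mul, v.map_mul, map_inv₀, ← hi0]
    rcases eq_or_ne (vv v x) 0 with h | h
    · exact absurd h hvv
    · calc (vv v x)⁻¹ * v (x i) ≤ (vv v x)⁻¹ * vv v x := mul_le_mul_right (le_vv v x i) _
      _ = 1 := inv_mul_cancel₀ hvv
  · intro hres
    have : res' v (((x i0)⁻¹ • x) i0) = 0 := congrFun hres i0
    rw [Pi.smul_apply, smul_eq_mul, inv_mul_cancel₀ hxi0, res'_one] at this
    exact one_ne_zero this
  · refine ⟨(x i0)⁻¹ • x, ⟨U.smul_mem _ hxU, fun i => ?_⟩, rfl⟩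
    rw [Pi.smul_apply, smul_eq_mul, v.map_mul, map_inv₀, ← hi0]
    calc (vv v x)⁻¹ * v (x i) ≤ (vv v x)⁻¹ * vv v x := mul_le_mul_right (le_vv v x i) _
    _ = 1 := inv_mul_cancel₀ hvv

end AuxLemmas3

section AuxLemmas4

variable {K : Type*} [Field K] {Γ : Type*} [LinearOrderedCommGroupWithZero Γ] (v : Valuation K Γ) {n : ℕ}

lemma res'_sum {ι : Type*} (s : Finset ι) (f : ι → K) (hf : ∀ j ∈ s, v (f j) ≤ 1) :
    res' v (∑ j ∈ s, f j) = ∑ j ∈ s, res' v (f j) := by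
  classical
  induction s using Finset.induction_on with
  | empty => simp [res'_zero]
  | @insert a s ha ih =>
    rw [Finset.sum_insert ha, Finset.sum_insert ha,
      res'_add v (hf a (Finset.mem_insert_self a s))
        (v.map_sum_le fun j hj => hf j (Finset.mem_insert_of_mem hj)),
      ih fun j hj => hf j (Finset.mem_insert_of_mem hj)]

lemma resv_sum {ι : Type*} (s : Finset ι) (a : ι → K) (x : ι → Fin n → K)
    (ha : ∀ j ∈ s, v (a j) ≤ 1) (hx : ∀ j ∈ s, ∀ i, v (x j i) ≤ 1) :
    resv v (∑ j ∈ s, a j • x j) = ∑ j ∈ s, res' v (a j) • resv v (x j) := by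
  funext i
  have hterm : ∀ j ∈ s, v (a j * x j i) ≤ 1 := fun j hj => by
    rw [v.map_mul]; exact mul_le_one' (ha j hj) (hx j hj i)
  have lhs : resv v (∑ j ∈ s, a j • x j) i = res' v (∑ j ∈ s, a j * x j i) := by
    simp [resv, Finset.sum_apply]
  rw [lhs, res'_sum v s _ hterm]
  simp only [Finset.sum_apply, Pi.smul_apply, smul_eq_mul]
  exact Finset.sum_congr rfl fun j hj => res'_mul v (ha j hj) (hx j hj i)

lemma finrank_resSub_le (U : Submodule K (Fin n → K)) :
    Module.finrank (Kbar v) (resSub v U) ≤ Module.finrank K U := by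
  classical
  set m := Module.finrank (Kbar v) (resSub v U) with hm
  let b : Module.Basis (Fin m) (Kbar v) (resSub v U) := Module.finBasis _ _
  have hmem : ∀ j : Fin m, ∃ z, (z ∈ U ∧ ∀ i, v (z i) ≤ 1) ∧
      resv v z = (b j : Fin n → Kbar v) := fun j => (b j).2
  choose x hx1 hx2 using hmem
  have hxU : ∀ j, x j ∈ U := fun j => (hx1 j).1
  have hxO : ∀ j, ∀ i, v (x j i) ≤ 1 := fun j => (hx1 j).2
  have hbind : LinearIndependent (Kbar v) (fun j => (b j : Fin n → Kbar v)) :=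
    b.linearIndependent.map' (resSub v U).subtype (Submodule.ker_subtype _)
  have hind : LinearIndependent K x := by
    rw [Fintype.linearIndependent_iff]
    intro g hg
    by_contra hcon
    push_neg at hcon
    obtain ⟨j1, hj1⟩ := hcon
    have hne : (Finset.univ : Finset (Fin m)).Nonempty := ⟨j1, Finset.mem_univ _⟩
    obtain ⟨j0, -, hj0⟩ := Finset.exists_mem_eq_sup Finset.univ hne (fun j => v (g j))
    have hgj0 : v (g j0) ≠ 0 := by
      intro h
      have h1 : v (g j1) ≤ v (g j0) := by
        rw [← hj0]; exact Finset.le_sup (f := fun j => v (g j)) (Finset.mem_univ j1)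
      rw [h, le_zero_iff, v.zero_iff] at h1
      exact hj1 h1
    have hgj0' : g j0 ≠ 0 := fun h => hgj0 (by rw [h, v.map_zero])
    set a : Fin m → K := fun j => g j / g j0 with ha
    have haO : ∀ j ∈ Finset.univ, v (a j) ≤ 1 := by
      intro j _
      rw [ha]
      simp only [div_eq_mul_inv]
      rw [v.map_mul, map_inv₀]
      have : v (g j) ≤ v (g j0) := by
        rw [← hj0]; exact Finset.le_sup (f := fun j => v (g j)) (Finset.mem_univ j)
      calc v (g j) * (v (g j0))⁻¹ ≤ v (g j0) * (v (g j0))⁻¹ := mul_le_mul_left this _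
      _ = 1 := mul_inv_cancel₀ hgj0
    have hsum : ∑ j, a j • x j = 0 := by
      have : ∑ j, a j • x j = (g j0)⁻¹ • ∑ j, g j • x j := by
        rw [Finset.smul_sum]
        exact Finset.sum_congr rfl fun j _ => by
          rw [smul_smul, ha]; congr 1; field_simp
      rw [this, hg, smul_zero]
    have hres : (0 : Fin n → Kbar v) = ∑ j, res' v (a j) • (b j : Fin n → Kbar v) := by
      have := resv_sum v Finset.univ a x haO (fun j _ => hxO j)
      rw [hsum, resv_zero] at this
      simp_rw [hx2] at this
      exact this
    have hz := (Fintype.linearIndependent_iff.mp hbind) (fun j => res' v (a j)) hres.symm j0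
    have : a j0 = 1 := by rw [ha]; exact div_self hgj0'
    rw [this, res'_one] at hz
    exact one_ne_zero hz
  have : Fintype.card (Fin m) ≤ Module.finrank K U := by
    have hind' : LinearIndependent K (fun j => (⟨x j, hxU j⟩ : U)) :=
      LinearIndependent.of_comp U.subtype hind
    exact LinearIndependent.fintype_card_le_finrank hind'
  simpa using this

end AuxLemmas4

section AuxLemmas5

/-- Separating coordinate sets exist for subspaces of small rank. -/
lemma exists_sep_finset (F : Type*) [Field F] (dd : ℕ) :
    ∀ {n : ℕ} (V : Submodule F (Fin n → F)), Module.finrank F V ≤ dd →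
      ∃ S : Finset (Fin n), S.card ≤ dd ∧ ∀ x ∈ V, (∀ i ∈ S, x i = 0) → x = 0 := by
  induction dd with
  | zero =>
    intro n V hV
    refine ⟨∅, le_rfl, fun x hx _ => ?_⟩
    rw [Nat.le_zero] at hV
    have : V = ⊥ := Submodule.finrank_eq_zero.mp hV
    rw [this] at hx
    simpa using hx
  | succ d ih =>
    intro n V hV
    by_cases hVbot : V = ⊥
    · exact ⟨∅, Nat.zero_le _, fun x hx _ => by rw [hVbot] at hx; simpa using hx⟩
    · obtain ⟨u, huV, hu0⟩ := V.ne_bot_iff.mp hVbot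
      obtain ⟨i0, hi0⟩ := Function.ne_iff.mp hu0
      set V' := V ⊓ LinearMap.ker (LinearMap.proj i0 : (Fin n → F) →ₗ[F] F) with hV'
      have hlt : V' < V := by
        refine lt_of_le_of_ne inf_le_left ?_
        intro h
        have : u ∈ V' := h ▸ huV
        rw [hV', Submodule.mem_inf, LinearMap.mem_ker] at this
        exact hi0 this.2
      have hfr : Module.finrank F V' < Module.finrank F V := Submodule.finrank_lt_finrank_of_lt hlt
      obtain ⟨S', hS'card, hS'⟩ := ih V' (by omega)
      refine ⟨insert i0 S', le_trans (Finset.card_insert_le _ _) (by omega), ?_⟩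
      intro x hxV hxS
      refine hS' x ⟨hxV, ?_⟩ (fun i hi => hxS i (Finset.mem_insert_of_mem hi))
      have := hxS i0 (Finset.mem_insert_self _ _)
      simpa [LinearMap.mem_ker] using this

variable {K : Type*} [Field K] {Γ : Type*} [LinearOrderedCommGroupWithZero Γ] (v : Valuation K Γ) {n : ℕ}

/-- Matrix lemmas: entries in 𝒪 give adjugate and determinant facts. -/
lemma det_entriesInO {P : Matrix (Fin n) (Fin n) K} (hP : EntriesInO v P) :
    v P.det ≤ 1 ∧ EntriesInO v P.adjugate ∧ res' v P.det = (resM v P).det := by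
  classical
  set P' : Matrix (Fin n) (Fin n) v.valuationSubring := fun i j => ⟨P i j, hP i j⟩ with hP'
  have hmap : P = P'.map (v.valuationSubring.subtype) := by
    ext i j; rfl
  have hdet : P.det = ((P'.det : v.valuationSubring) : K) := by
    rw [hmap, ← RingHom.mapMatrix_apply, ← RingHom.map_det]
    rfl
  have hdetO : v P.det ≤ 1 := by rw [hdet]; exact P'.det.2
  refine ⟨hdetO, ?_, ?_⟩
  · intro i j
    have : P.adjugate = (P'.adjugate).map (v.valuationSubring.subtype) := by
      rw [hmap, ← RingHom.mapMatrix_apply, ← RingHom.map_adjugate, RingHom.mapMatrix_apply]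
    rw [this]
    exact (P'.adjugate i j).2
  · have hres : resM v P = P'.map (IsLocalRing.residue v.valuationSubring) := by
      ext i j
      exact res'_def v (hP i j)
    have h1 : res' v P.det = IsLocalRing.residue v.valuationSubring P'.det := by
      rw [res'_def v hdetO]
      congr 1
      exact Subtype.ext hdet
    rw [hres, h1, RingHom.map_det, RingHom.mapMatrix_apply]
    rfl

/-- If `P` has entries in `𝒪` and its residue matrix has nonzero determinant, then `P ∈ GLₙ(𝒪)`
with explicit inverse `P.det⁻¹ • P.adjugate` having entries in `𝒪`. -/
lemma inv_entriesInO {P : Matrix (Fin n) (Fin n) K} (hP : EntriesInO v P)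
    (hdet : (resM v P).det ≠ 0) :
    v P.det = 1 ∧ EntriesInO v (P.det⁻¹ • P.adjugate) ∧
      P * (P.det⁻¹ • P.adjugate) = 1 ∧ (P.det⁻¹ • P.adjugate) * P = 1 := by
  obtain ⟨hd1, hadj, hrd⟩ := det_entriesInO v hP
  have hv1 : v P.det = 1 := by
    rcases lt_or_eq_of_le hd1 with hlt | heq
    · exfalso; apply hdet; rw [← hrd]; exact (res'_eq_zero_iff v hd1).mpr hlt
    · exact heq
  have hd0 : P.det ≠ 0 := by
    intro h; rw [h, v.map_zero] at hv1; exact zero_ne_one hv1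
  refine ⟨hv1, ?_, ?_, ?_⟩
  · intro i j
    simp only [Matrix.smul_apply, smul_eq_mul]
    rw [v.map_mul, map_inv₀, hv1, inv_one, one_mul]
    exact hadj i j
  · rw [Matrix.mul_smul, Matrix.mul_adjugate, smul_smul, inv_mul_cancel₀ hd0, one_smul]
  · rw [Matrix.smul_mul, Matrix.adjugate_mul, smul_smul, inv_mul_cancel₀ hd0, one_smul]

end AuxLemmas5

variable {K : Type*} [Field K] {Γ : Type*} [LinearOrderedCommGroupWithZero Γ]

/-- if `U, W ⊆ Kⁿ` have the same dimension `d` and `res U = res W`,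
then some `M ∈ GLₙ(𝒪)` with `res M = Iₙ` (hence a risometry) maps `U` onto `W`. -/
theorem exists_risometry_matrix_mapping_subspace
    (v : Valuation K Γ) {n d : ℕ}
    (U W : Submodule K (Fin n → K))
    (hU : Module.finrank K U = d) (hW : Module.finrank K W = d)
    (hres : resSet v (U : Set (Fin n → K)) = resSet v (W : Set (Fin n → K))) :
    ∃ M : Matrix (Fin n) (Fin n) K, MemGLO v M ∧ resM v M = 1 ∧
      (∀ x : Fin n → K, rvEq v (M.mulVec x) x) ∧
      U.map M.mulVecLin = W := by
  classical
  -- residue subspaces agree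
  have hUW : resSub v W = resSub v U := by
    ext a; rw [mem_resSub, mem_resSub, hres]
  -- choose a separating coordinate set of size d
  have hfr : Module.finrank (Kbar v) (resSub v U) ≤ d := hU ▸ finrank_resSub_le v U
  obtain ⟨S0, hS0card, hS0⟩ := exists_sep_finset (Kbar v) d (resSub v U) hfr
  have hd_le_n : d ≤ n := by
    rw [← hU]
    have := Submodule.finrank_le U
    simpa using this
  obtain ⟨S, hS0S, -, hScard⟩ :=
    Finset.exists_subsuperset_card_eq (S0.subset_univ) hS0card
      (by simp [hd_le_n])
  have hsepS : ∀ x ∈ resSub v U, (∀ i ∈ S, x i = 0) → x = 0 :=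
    fun x hx h => hS0 x hx fun i hi => h i (hS0S hi)
  set E := S.orderIsoOfFin hScard with hE
  set σ : Fin d → Fin n := fun k => (E k : Fin n) with hσ
  have hσS : ∀ k, σ k ∈ S := fun k => (E k).2
  have hSσ : ∀ j ∈ S, ∃ k, σ k = j := fun j hj =>
    ⟨E.symm ⟨j, hj⟩, congrArg Subtype.val (E.apply_symm_apply ⟨j, hj⟩)⟩
  have hsep : ∀ x ∈ resSub v U, (∀ k, x (σ k) = 0) → x = 0 := by
    intro x hx h
    refine hsepS x hx fun i hi => ?_
    obtain ⟨k, rfl⟩ := hSσ i hi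
    exact h k
  -- injectivity of the projection on subspaces with residue `resSub v U`
  have hinj : ∀ (V : Submodule K (Fin n → K)), resSub v V = resSub v U →
      ∀ x ∈ V, (∀ k, x (σ k) = 0) → x = 0 := by
    intro V hV x hxV hx0
    by_contra hne
    obtain ⟨c, hc0, hc1, hcO, hcres, hcmem⟩ := exists_scale v V hxV hne
    apply hcres
    apply hsep _ (hV ▸ hcmem)
    intro k
    show res' v ((c • x) (σ k)) = 0
    rw [Pi.smul_apply, smul_eq_mul, hx0 k, mul_zero, res'_zero]
  -- boundedness: vectors with bounded projection coordinates lie in 𝒪ⁿ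
  have hbound : ∀ (V : Submodule K (Fin n → K)), resSub v V = resSub v U →
      ∀ x ∈ V, (∀ k, v (x (σ k)) ≤ 1) → ∀ i, v (x i) ≤ 1 := by
    intro V hV x hxV hxσ i
    by_contra hgt
    push_neg at hgt
    have hx0 : x ≠ 0 := by
      intro h; rw [h] at hgt; simp at hgt
    obtain ⟨c, hc0, hc1, hcO, hcres, hcmem⟩ := exists_scale v V hxV hx0
    have hvvx : 1 < vv v x := lt_of_lt_of_le hgt (le_vv v x i)
    have hvc : v c < 1 := by
      by_contra hge
      push_neg at hge
      have h2 : vv v x ≤ v c * vv v x := le_mul_of_one_le_left' hge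
      rw [hc1] at h2
      exact absurd (lt_of_lt_of_le hvvx h2) (lt_irrefl _)
    apply hcres
    apply hsep _ (hV ▸ hcmem)
    intro k
    show res' v ((c • x) (σ k)) = 0
    rw [res'_eq_zero_iff v (hcO (σ k)), Pi.smul_apply, smul_eq_mul, v.map_mul]
    calc v c * v (x (σ k)) ≤ v c * 1 := mul_le_mul_right (hxσ k) _
    _ = v c := mul_one _
    _ < 1 := hvc
  -- standard bases of U and W adapted to σ
  have hbase : ∀ (V : Submodule K (Fin n → K)), resSub v V = resSub v U →
      Module.finrank K V = d →
      ∃ uv : Fin d → (Fin n → K), (∀ k, uv k ∈ V) ∧ (∀ k i, v (uv k i) ≤ 1) ∧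
        (∀ k k', uv k (σ k') = (Pi.single k 1 : Fin d → K) k') ∧
        V = Submodule.span K (Set.range uv) := by
    intro V hV hVd
    set φ : V →ₗ[K] (Fin d → K) := (LinearMap.funLeft K K σ).comp V.subtype with hφ
    have hφapp : ∀ (z : V) (k : Fin d), φ z = (fun k => (z : Fin n → K) (σ k)) := by
      intro z k; rfl
    have hφinj : Function.Injective φ := by
      rw [← LinearMap.ker_eq_bot]
      refine LinearMap.ker_eq_bot'.mpr fun z hz => ?_
      have hz' : (z : Fin n → K) = 0 :=
        hinj V hV z z.2 (fun k => congrFun hz k)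
      exact Subtype.ext hz'
    have hφsurj : Function.Surjective φ := by
      rw [← LinearMap.range_eq_top]
      apply Submodule.eq_top_of_finrank_eq
      rw [LinearMap.finrank_range_of_inj hφinj, hVd, Module.finrank_fin_fun]
    set e := LinearEquiv.ofBijective φ ⟨hφinj, hφsurj⟩ with he
    set uv : Fin d → (Fin n → K) := fun k => ((e.symm (Pi.single k 1) : V) : Fin n → K)
      with huv
    have hmem : ∀ k, uv k ∈ V := fun k => (e.symm (Pi.single k 1) : V).2
    have hσk : ∀ k k', uv k (σ k') = (Pi.single k 1 : Fin d → K) k' := by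
      intro k k'
      have h1 : φ (e.symm (Pi.single k 1)) = Pi.single k 1 := e.apply_symm_apply _
      exact congrFun h1 k'
    have hO : ∀ k i, v (uv k i) ≤ 1 := by
      intro k
      refine hbound V hV _ (hmem k) fun k' => ?_
      rw [hσk k k', Pi.single_apply]
      split
      · rw [v.map_one]
      · rw [v.map_zero]; exact zero_le'
    refine ⟨uv, hmem, hO, hσk, ?_⟩
    apply le_antisymm
    · intro z hz
      have hzz : (⟨z, hz⟩ : V) = e.symm (e ⟨z, hz⟩) := (e.symm_apply_apply _).symm
      set y := e ⟨z, hz⟩ with hy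
      have hy1 : y = ∑ k, y k • (Pi.single k 1 : Fin d → K) := by
        funext j
        simp only [Finset.sum_apply, Pi.smul_apply, Pi.single_apply, smul_eq_mul]
        rw [Finset.sum_congr rfl (fun k _ => by rw [mul_ite, mul_one, mul_zero]),
          Finset.sum_ite_eq Finset.univ j y]
        simp
      have hz2 : z = ∑ k, y k • uv k := by
        have h3 : (⟨z, hz⟩ : V) = ∑ k, y k • e.symm (Pi.single k 1) := by
          rw [hzz]
          conv_lhs => rw [hy1]
          rw [map_sum]
          exact Finset.sum_congr rfl fun k _ => by rw [map_smul]
        have h4 := congrArg (Subtype.val : V → (Fin n → K)) h3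
        simpa [huv] using h4
      rw [hz2]
      exact Submodule.sum_mem _ fun k _ =>
        Submodule.smul_mem _ _ (Submodule.subset_span (Set.mem_range_self k))
    · rw [Submodule.span_le]
      rintro _ ⟨k, rfl⟩
      exact hmem k
  obtain ⟨uv, hmemU, hOU, hσU, hspanU⟩ := hbase U rfl hU
  obtain ⟨wv, hmemW, hOW, hσW, hspanW⟩ := hbase W hUW hW
  -- residues of the adapted bases agree
  have hres_eq : ∀ k, resv v (uv k) = resv v (wv k) := by
    intro k
    have h1 : resv v (uv k) ∈ resSub v U := ⟨uv k, ⟨hmemU k, fun i => hOU k i⟩, rfl⟩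
    have h2 : resv v (wv k) ∈ resSub v U :=
      hUW ▸ (⟨wv k, ⟨hmemW k, fun i => hOW k i⟩, rfl⟩ : resv v (wv k) ∈ resSub v W)
    have hdiff : resv v (uv k) - resv v (wv k) ∈ resSub v U :=
      Submodule.sub_mem _ h1 h2
    have hz : resv v (uv k) - resv v (wv k) = 0 := by
      apply hsep _ hdiff
      intro k'
      show res' v (uv k (σ k')) - res' v (wv k (σ k')) = 0
      rw [hσU k k', hσW k k', sub_self]
    exact sub_eq_zero.mp hz
  have hclose : ∀ k i, v ((wv k - uv k) i) < 1 := by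
    intro k i
    have hle : v ((wv k - uv k) i) ≤ 1 := by
      rw [Pi.sub_apply, sub_eq_add_neg]
      refine le_trans (v.map_add _ _) (max_le (hOW k i) ?_)
      rw [v.map_neg]; exact hOU k i
    rw [← res'_eq_zero_iff v hle]
    show res' v (wv k i - uv k i) = 0
    have := resv_sub v (fun i => hOW k i) (fun i => hOU k i)
    have h2 : res' v (wv k i - uv k i) = res' v (wv k i) - res' v (uv k i) :=
      congrFun this i
    rw [h2]
    have h3 : res' v (uv k i) = res' v (wv k i) := congrFun (hres_eq k) i
    rw [h3, sub_self]
  -- the matrices P, D, Q, N, M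
  set col : Fin n → (Fin n → K) :=
    fun j => if h : j ∈ S then uv (E.symm ⟨j, h⟩) else Pi.single j 1 with hcol
  set colD : Fin n → (Fin n → K) :=
    fun j => if h : j ∈ S then wv (E.symm ⟨j, h⟩) - uv (E.symm ⟨j, h⟩) else 0 with hcolD
  have hEσ : ∀ k (h : σ k ∈ S), E.symm ⟨σ k, h⟩ = k := by
    intro k h
    have : (⟨σ k, h⟩ : {x // x ∈ S}) = E k := Subtype.ext rfl
    rw [this, OrderIso.symm_apply_apply]
  have hcolσ : ∀ k, col (σ k) = uv k := by
    intro k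
    rw [hcol]
    simp only
    rw [dif_pos (hσS k), hEσ k (hσS k)]
  have hcolDσ : ∀ k, colD (σ k) = wv k - uv k := by
    intro k
    rw [hcolD]
    simp only
    rw [dif_pos (hσS k), hEσ k (hσS k)]
  set P : Matrix (Fin n) (Fin n) K := Matrix.of fun i j => col j i with hP
  set D : Matrix (Fin n) (Fin n) K := Matrix.of fun i j => colD j i with hD
  have hPO : EntriesInO v P := by
    intro i j
    show v (col j i) ≤ 1
    rw [hcol]
    simp only
    split
    · exact hOU _ i
    · rw [Pi.single_apply]
      split
      · rw [v.map_one]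
      · rw [v.map_zero]; exact zero_le'
  have hDsmall : ∀ i j, v (D i j) < 1 := by
    intro i j
    show v (colD j i) < 1
    rw [hcolD]
    simp only
    split
    · exact hclose _ i
    · rw [Pi.zero_apply, v.map_zero]; exact zero_lt_one
  -- the residue matrix of P is invertible
  have hPdet : (resM v P).det ≠ 0 := by
    intro hdet0
    obtain ⟨x, hx0, hmul⟩ := (Matrix.exists_mulVec_eq_zero_iff).mpr hdet0
    apply hx0
    have hentry : ∀ i j, resM v P i j = res' v (col j i) := fun i j => rfl
    have happ : ∀ i, ∑ j, res' v (col j i) * x j = 0 := by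
      intro i
      have := congrFun hmul i
      rwa [Matrix.mulVec, dotProduct] at this
    have hstage1 : ∀ k, x (σ k) = 0 := by
      intro k
      have h0 := happ (σ k)
      rw [Finset.sum_eq_single (σ k)] at h0
      · rw [hcolσ k] at h0
        have : res' v (uv k (σ k)) = 1 := by
          rw [hσU k k, Pi.single_eq_same, res'_one]
        rwa [this, one_mul] at h0
      · intro j _ hj
        by_cases hjS : j ∈ S
        · obtain ⟨k'', rfl⟩ := hSσ j hjS
          have hkk : k'' ≠ k := fun h => hj (by rw [h])
          rw [hcolσ k'']
          have : res' v (uv k'' (σ k)) = 0 := by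
            rw [hσU k'' k, Pi.single_apply, if_neg (fun h : k = k'' => hkk h.symm), res'_zero]
          rw [this, zero_mul]
        · have : col j (σ k) = 0 := by
            rw [hcol]; simp only
            rw [dif_neg hjS, Pi.single_apply, if_neg]
            intro h
            exact hjS (h ▸ hσS k)
          rw [this, res'_zero, zero_mul]
      · intro h
        exact absurd (Finset.mem_univ (σ k)) h
    funext j
    by_cases hjS : j ∈ S
    · obtain ⟨k, rfl⟩ := hSσ j hjS
      exact hstage1 k
    · have h0 := happ j
      rw [Finset.sum_eq_single j] at h0
      · have : col j j = 1 := by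
          rw [hcol]; simp only
          rw [dif_neg hjS, Pi.single_eq_same]
        rwa [this, res'_one, one_mul] at h0
      · intro j' _ hj'
        by_cases hj'S : j' ∈ S
        · obtain ⟨k', rfl⟩ := hSσ j' hj'S
          rw [hstage1 k', mul_zero]
        · have : col j' j = 0 := by
            rw [hcol]; simp only
            rw [dif_neg hj'S, Pi.single_apply, if_neg (fun h : j = j' => hj' (h ▸ rfl))]
          rw [this, res'_zero, zero_mul]
      · intro h
        exact absurd (Finset.mem_univ j) h
  obtain ⟨hPdet1, hQO, hPQ, hQP⟩ := inv_entriesInO v hPO hPdet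
  set Q : Matrix (Fin n) (Fin n) K := P.det⁻¹ • P.adjugate with hQ
  set N : Matrix (Fin n) (Fin n) K := D * Q with hN
  have hNsmall : ∀ i j, v (N i j) < 1 := by
    intro i j
    rw [hN, Matrix.mul_apply]
    refine v.map_sum_lt one_ne_zero fun l _ => ?_
    rw [v.map_mul]
    calc v (D i l) * v (Q l j) ≤ v (D i l) * 1 := mul_le_mul_right (hQO l j) _
    _ = v (D i l) := mul_one _
    _ < 1 := hDsmall i l
  set M : Matrix (Fin n) (Fin n) K := 1 + N with hM
  have hMentry : ∀ i j, M i j = (if i = j then (1:K) else 0) + N i j := by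
    intro i j
    rw [hM, Matrix.add_apply, Matrix.one_apply]
  have hMO : EntriesInO v M := by
    intro i j
    rw [hMentry]
    refine le_trans (v.map_add _ _) (max_le ?_ (le_of_lt (hNsmall i j)))
    split
    · rw [v.map_one]
    · rw [v.map_zero]; exact zero_le'
  have hresM : resM v M = 1 := by
    ext i j
    show res' v (M i j) = (1 : Matrix (Fin n) (Fin n) (Kbar v)) i j
    rw [hMentry i j, Matrix.one_apply]
    have h1 : v (if i = j then (1:K) else 0) ≤ 1 := by
      split
      · rw [v.map_one]
      · rw [v.map_zero]; exact zero_le'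
    rw [res'_add v h1 (le_of_lt (hNsmall i j)),
      (res'_eq_zero_iff v (le_of_lt (hNsmall i j))).mpr (hNsmall i j), add_zero]
    split
    · exact res'_one v
    · exact res'_zero v
  have hMdet : (resM v M).det ≠ 0 := by
    rw [hresM, Matrix.det_one]
    exact one_ne_zero
  obtain ⟨hMdet1, hMQO, hMQ1, hMQ2⟩ := inv_entriesInO v hMO hMdet
  refine ⟨M, ⟨hMO, M.det⁻¹ • M.adjugate, hMQ1, hMQ2, hMQO⟩, hresM, ?_, ?_⟩
  · -- risometry
    intro x
    rcases eq_or_ne x 0 with rfl | hx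
    · exact Or.inr ⟨Matrix.mulVec_zero M, rfl⟩
    · left
      have hvvx : vv v x ≠ 0 := fun h => hx ((vv_eq_zero_iff v).mp h)
      have hNx : M.mulVec x - x = N.mulVec x := by
        rw [hM, Matrix.add_mulVec, Matrix.one_mulVec, add_sub_cancel_left]
      have hlt : vv v (N.mulVec x) < vv v x := by
        refine vv_lt v hvvx fun i => ?_
        have : (N.mulVec x) i = ∑ j, N i j * x j := by
          rw [Matrix.mulVec, dotProduct]
        rw [this]
        refine v.map_sum_lt hvvx fun j _ => ?_
        rw [v.map_mul, mul_comm]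
        calc v (x j) * v (N i j) < vv v x * 1 :=
          mul_lt_mul_of_le_of_lt_of_nonneg_of_pos (le_vv v x j) (hNsmall i j) zero_le' (zero_lt_iff.mpr hvvx)
        _ = vv v x := mul_one _
      have hMx : vv v (M.mulVec x) = vv v x := by
        have h1 : M.mulVec x = x + N.mulVec x := by
          rw [hM, Matrix.add_mulVec, Matrix.one_mulVec]
        rw [h1, vv_add_eq_of_lt v hlt]
      rw [hNx, hMx]
      exact hlt
  · -- M maps U onto W
    have hMu : ∀ k, M.mulVec (uv k) = wv k := by
      intro k
      have h1 : uv k = P.mulVec (Pi.single (σ k) 1) := by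
        funext i
        rw [Matrix.mulVec_single]
        show uv k i = P i (σ k) * 1
        rw [mul_one]
        show uv k i = col (σ k) i
        rw [hcolσ k]
      have hQu : Q.mulVec (uv k) = Pi.single (σ k) 1 := by
        rw [h1, Matrix.mulVec_mulVec, hQP, Matrix.one_mulVec]
      have hDu : D.mulVec (Pi.single (σ k) 1) = wv k - uv k := by
        funext i
        rw [Matrix.mulVec_single]
        show D i (σ k) * 1 = (wv k - uv k) i
        rw [mul_one]
        show colD (σ k) i = (wv k - uv k) i
        rw [hcolDσ k]
      calc M.mulVec (uv k) = uv k + (D * Q).mulVec (uv k) := by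
            rw [hM, Matrix.add_mulVec, Matrix.one_mulVec, hN]
      _ = uv k + D.mulVec (Q.mulVec (uv k)) := by rw [Matrix.mulVec_mulVec]
      _ = uv k + (wv k - uv k) := by rw [hQu, hDu]
      _ = wv k := by rw [add_sub_cancel]
    have hcomp : ⇑M.mulVecLin ∘ uv = wv := by
      funext k
      show M.mulVecLin (uv k) = wv k
      rw [Matrix.mulVecLin_apply]
      exact hMu k
    rw [hspanU, Submodule.map_span, hspanW, ← Set.range_comp, hcomp]

end
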